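/- Let H be a hypergraph with vertices v_1,…,v_n and hyperedges e_1,…,e_m, with no isolated vertices, and let σ ∈ 𝔦_m ⊗ 𝔦_n be its idem-Clifford transversal representation. Then there exists a smallest integer k ≥ 1 such that σ^k has a nonzero term of the form α ε_{{1,…,m}} ⊗ x_I in its canonical expansion; this k equals the minimum cardinality of a transversal of H, and for this k, every I with a nonzero coefficient on ε_{{1,…,m}} ⊗ x_I in σ^k satisfies |I| = k and {v_i : i ∈ I} is a minimum-cardinality transversal of H, with every such minimum transversal arising this way. -/

import Mathlib

open Finset

/-- Regular-representation action of the idem-Clifford blade `ε_J` (product of the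
idempotent generators `ε_j`, `j ∈ J`, satisfying `ε_j ^ 2 = ε_j`) on the coefficient
space, acting in the first coordinate. -/
noncomputable def epsBladeL (α γ : Type*) [DecidableEq α] (J : Finset α) :
    Module.End ℝ ((Finset α × γ) → ℝ) where
  toFun c := fun p => ∑ T ∈ p.1.powerset.filter (fun T => T ∪ J = p.1), c (T, p.2)
  map_add' x y := by
    funext p
    simp [Finset.sum_add_distrib]
  map_smul' r x := by
    funext p
    simp [Finset.mul_sum]

/-- Regular-representation action of the idem-Clifford blade `x_I` (product of the
idempotent generators `x_i`, `i ∈ I`, satisfying `x_i ^ 2 = x_i`) on the coefficient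
space, acting in the second coordinate. -/
noncomputable def epsBladeR (γ β : Type*) [DecidableEq β] (I : Finset β) :
    Module.End ℝ ((γ × Finset β) → ℝ) where
  toFun c := fun p => ∑ T ∈ p.2.powerset.filter (fun T => T ∪ I = p.2), c (p.1, T)
  map_add' x y := by
    funext p
    simp [Finset.sum_add_distrib]
  map_smul' r x := by
    funext p
    simp [Finset.mul_sum]

/-- The idem-Clifford transversal representation
`σ = Σ_i (∏_{j : v_i ∈ e_j} ε_j) ⊗ x_i ∈ 𝔦_m ⊗ 𝔦_n` of the hypergraph with
hyperedges `E : Fin m → Finset (Fin n)`. -/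
noncomputable def sigmaRep {n m : ℕ} (E : Fin m → Finset (Fin n)) :
    Module.End ℝ ((Finset (Fin m) × Finset (Fin n)) → ℝ) :=
  ∑ i : Fin n,
    epsBladeL (Fin m) (Finset (Fin n)) (Finset.univ.filter (fun j => i ∈ E j)) *
      epsBladeR (Finset (Fin m)) (Fin n) {i}

/-- The coefficient vector of `1 ∈ 𝔦_m ⊗ 𝔦_n`: the indicator of the empty blade.
Applying (the multiplication operator of) `u` to it and evaluating at `(J, I)` reads off
the coefficient `u_{(J,I)}` of the blade `ε_J ⊗ x_I` in the canonical expansion of `u`. -/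
noncomputable def delta0 (n m : ℕ) : (Finset (Fin m) × Finset (Fin n)) → ℝ :=
  fun p => if p = ((∅ : Finset (Fin m)), (∅ : Finset (Fin n))) then 1 else 0


section Aux
variable {n m : ℕ}

lemma epsBladeL_apply {α γ : Type*} [DecidableEq α] (J : Finset α)
    (c : (Finset α × γ) → ℝ) (p : Finset α × γ) :
    epsBladeL α γ J c p = ∑ T ∈ p.1.powerset.filter (fun T => T ∪ J = p.1), c (T, p.2) := rfl

lemma epsBladeR_apply {γ β : Type*} [DecidableEq β] (I : Finset β)
    (c : (γ × Finset β) → ℝ) (p : γ × Finset β) :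
    epsBladeR γ β I c p = ∑ T ∈ p.2.powerset.filter (fun T => T ∪ I = p.2), c (p.1, T) := rfl

/-- count function -/
noncomputable def Fk (E : Fin m → Finset (Fin n)) (k : ℕ) :
    (Finset (Fin m) × Finset (Fin n)) → ℝ :=
  fun p => ∑ f : Fin k → Fin n,
    if (Finset.univ.biUnion (fun t => Finset.univ.filter (fun j => f t ∈ E j)) = p.1
        ∧ Finset.image f Finset.univ = p.2) then (1:ℝ) else 0

lemma sum_sum_ite {α β : Type*} [DecidableEq α] [DecidableEq β]
    (s : Finset α) (t : Finset β) (X : α) (Y : β) (r : ℝ) :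
    ∑ T ∈ s, ∑ U ∈ t, (if X = T ∧ Y = U then r else 0)
      = if X ∈ s ∧ Y ∈ t then r else 0 := by
  simp only [ite_and]
  have h1 : ∀ T, (∑ U ∈ t, if X = T then if Y = U then r else 0 else 0)
      = if X = T then (∑ U ∈ t, if Y = U then r else 0) else 0 := by
    intro T; by_cases h : X = T <;> simp [h]
  simp only [h1]
  rw [Finset.sum_ite_eq s X (fun _ => ∑ U ∈ t, if Y = U then r else 0),
      Finset.sum_ite_eq t Y (fun _ => r)]

lemma sigmaRep_pow (E : Fin m → Finset (Fin n)) (k : ℕ) :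
    ((sigmaRep E) ^ k) (delta0 n m) = Fk E k := by
  induction k with
  | zero =>
    funext p
    simp only [pow_zero, Module.End.one_apply, Fk, delta0]
    rw [Fintype.sum_eq_single (fun t : Fin 0 => (Fin.elim0 t : Fin n))]
    · simp [delta0, Prod.ext_iff, eq_comm]
    · intro f hf; exact absurd (funext fun t => t.elim0) hf
  | succ k ih =>
    rw [pow_succ']
    funext p
    obtain ⟨A, B⟩ := p
    rw [Module.End.mul_apply, ih]
    simp only [sigmaRep, LinearMap.sum_apply, Module.End.mul_apply, Finset.sum_apply]
    have hL : ∀ i : Fin n,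
        epsBladeL (Fin m) (Finset (Fin n)) (Finset.univ.filter (fun j => i ∈ E j))
          (epsBladeR (Finset (Fin m)) (Fin n) {i} (Fk E k)) ((A, B)) =
        ∑ f : Fin k → Fin n,
          if (Finset.univ.filter (fun j => i ∈ E j)
                ∪ Finset.univ.biUnion (fun t => Finset.univ.filter (fun j => f t ∈ E j)) = A
              ∧ insert i (Finset.image f Finset.univ) = B) then (1:ℝ) else 0 := by
      intro i
      rw [epsBladeL_apply]
      have h2 : ∀ T : Finset (Fin m),
          epsBladeR (Finset (Fin m)) (Fin n) {i} (Fk E k) ((T, B)) =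
          ∑ U ∈ B.powerset.filter (fun U => U ∪ {i} = B), Fk E k (T, U) := fun T => rfl
      simp only [h2, Fk]
      rw [Finset.sum_comm]
      refine Eq.trans (Finset.sum_congr rfl fun U _ => Finset.sum_comm) ?_
      rw [Finset.sum_comm]
      refine Eq.trans (Finset.sum_congr rfl fun f _ =>
        Eq.trans Finset.sum_comm (sum_sum_ite _ _ _ _ 1)) ?_
      refine Finset.sum_congr rfl fun f _ => ?_
      congr 1
      simp only [Finset.mem_filter, Finset.mem_powerset, eq_iff_iff]
      constructor
      · rintro ⟨⟨_, h1⟩, ⟨_, h3⟩⟩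
        constructor
        · rw [Finset.union_comm]; exact h1
        · rw [← h3, Finset.union_comm, Finset.insert_eq]
      · rintro ⟨h1, h3⟩
        refine ⟨⟨?_, ?_⟩, ?_, ?_⟩
        · rw [← h1]; exact Finset.subset_union_right
        · rw [Finset.union_comm]; exact h1
        · rw [← h3]; exact Finset.subset_insert _ _
        · rw [Finset.union_comm, ← Finset.insert_eq]; exact h3
    simp only [hL, Fk]
    rw [← Fintype.sum_equiv (Fin.consEquiv (fun _ : Fin (k+1) => Fin n))
      (fun q => if (Finset.univ.filter (fun j => q.1 ∈ E j)
            ∪ Finset.univ.biUnion (fun t => Finset.univ.filter (fun j => q.2 t ∈ E j)) = A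
          ∧ insert q.1 (Finset.image q.2 Finset.univ) = B) then (1:ℝ) else 0)
      (fun f => if (Finset.univ.biUnion (fun t => Finset.univ.filter (fun j => f t ∈ E j)) = A
          ∧ Finset.image f Finset.univ = B) then (1:ℝ) else 0) ?_]
    · rw [Fintype.sum_prod_type]
    · rintro ⟨i, f⟩
      have e1 : Finset.univ.biUnion
            (fun t : Fin (k+1) => Finset.univ.filter (fun j => (Fin.cons i f : Fin (k+1) → Fin n) t ∈ E j))
          = Finset.univ.filter (fun j => i ∈ E j)
            ∪ Finset.univ.biUnion (fun t => Finset.univ.filter (fun j => f t ∈ E j)) := by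
        ext j
        simp only [Finset.mem_biUnion, Finset.mem_filter, Finset.mem_univ, true_and,
          Finset.mem_union]
        rw [Fin.exists_fin_succ]
        simp [Fin.cons_zero, Fin.cons_succ]
      have e2 : Finset.image (Fin.cons i f : Fin (k+1) → Fin n) Finset.univ
          = insert i (Finset.image f Finset.univ) := by
        ext x
        simp only [Finset.mem_image, Finset.mem_univ, true_and, Finset.mem_insert]
        rw [Fin.exists_fin_succ]
        simp [Fin.cons_zero, Fin.cons_succ, eq_comm]
      simp only [Fin.consEquiv, Equiv.coe_fn_mk, e1, e2]
      congr 1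
      exact congrArg (fun S => S = A ∧ insert i (Finset.image f Finset.univ) = B) e1.symm

lemma Fk_ne_zero_iff (E : Fin m → Finset (Fin n)) (k : ℕ)
    (A : Finset (Fin m)) (B : Finset (Fin n)) :
    Fk E k (A, B) ≠ 0 ↔ ∃ f : Fin k → Fin n,
      Finset.univ.biUnion (fun t => Finset.univ.filter (fun j => f t ∈ E j)) = A
        ∧ Finset.image f Finset.univ = B := by
  unfold Fk
  rw [Finset.sum_boole]
  simp only [ne_eq, Nat.cast_eq_zero, Finset.card_eq_zero, ← Finset.not_nonempty_iff_eq_empty,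
    not_not, Finset.filter_nonempty_iff]
  simp

lemma exists_fun_image (k : ℕ) (I : Finset (Fin n)) (hne : I.Nonempty) (hcard : I.card ≤ k) :
    ∃ f : Fin k → Fin n, Finset.image f Finset.univ = I := by
  obtain ⟨i0, hi0⟩ := hne
  refine ⟨fun t => if h : (t : ℕ) < I.card then (I.orderIsoOfFin rfl ⟨t, h⟩ : Fin n) else i0, ?_⟩
  apply Finset.Subset.antisymm
  · intro x hx
    simp only [Finset.mem_image, Finset.mem_univ, true_and] at hx
    obtain ⟨t, rfl⟩ := hx
    by_cases h : (t : ℕ) < I.card <;> simp [h, hi0, Finset.coe_mem]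
  · intro x hx
    obtain ⟨a, ha⟩ := (I.orderIsoOfFin rfl).surjective ⟨x, hx⟩
    have hlt : (a : ℕ) < k := lt_of_lt_of_le a.2 hcard
    simp only [Finset.mem_image, Finset.mem_univ, true_and]
    refine ⟨⟨a, hlt⟩, ?_⟩
    have : ((⟨(a : ℕ), a.2⟩ : Fin I.card)) = a := rfl
    simp only [a.2, dif_pos]
    rw [show (⟨(a : ℕ), a.2⟩ : Fin I.card) = a from rfl, ha]

lemma sigma_pow_ne_zero_iff (E : Fin m → Finset (Fin n)) (hm : 0 < m) (k : ℕ) (I : Finset (Fin n)) :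
    ((sigmaRep E) ^ k) (delta0 n m) ((Finset.univ : Finset (Fin m)), I) ≠ 0 ↔
      ((∀ j : Fin m, ∃ i ∈ I, i ∈ E j) ∧ I.card ≤ k) := by
  rw [sigmaRep_pow, Fk_ne_zero_iff]
  constructor
  · rintro ⟨f, hf1, rfl⟩
    have htr : ∀ j : Fin m, ∃ i ∈ Finset.image f Finset.univ, i ∈ E j := by
      intro j
      have : j ∈ Finset.univ.biUnion (fun t => Finset.univ.filter (fun j => f t ∈ E j)) := by
        rw [hf1]; exact Finset.mem_univ j
      simp only [Finset.mem_biUnion, Finset.mem_filter, Finset.mem_univ, true_and] at this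
      obtain ⟨t, ht⟩ := this
      exact ⟨f t, Finset.mem_image_of_mem f (Finset.mem_univ t), ht⟩
    refine ⟨htr, ?_⟩
    calc (Finset.image f Finset.univ).card ≤ (Finset.univ : Finset (Fin k)).card :=
          Finset.card_image_le
      _ = k := by simp
  · rintro ⟨htr, hcard⟩
    have hne : I.Nonempty := by
      obtain ⟨i, hi, _⟩ := htr ⟨0, hm⟩
      exact ⟨i, hi⟩
    obtain ⟨f, hf⟩ := exists_fun_image k I hne hcard
    refine ⟨f, ?_, hf⟩
    rw [Finset.eq_univ_iff_forall]
    intro j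
    obtain ⟨i, hi, hiE⟩ := htr j
    rw [← hf] at hi
    simp only [Finset.mem_image, Finset.mem_univ, true_and] at hi
    obtain ⟨t, rfl⟩ := hi
    simp only [Finset.mem_biUnion, Finset.mem_filter, Finset.mem_univ, true_and]
    exact ⟨t, hiE⟩

end Aux

/-- Let `H` be a hypergraph with `n` vertices and `m ≥ 1` nonempty
hyperedges and no isolated vertices, and `σ ∈ 𝔦_m ⊗ 𝔦_n` its idem-Clifford transversal
representation.  Then there is a smallest integer `k ≥ 1` such that `σ^k` has a nonzero
term of the form `α ε_{{1,…,m}} ⊗ x_I` in its canonical expansion; this `k` equals the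
minimum cardinality of a transversal of `H`; and for this `k`, every `I` with a nonzero
coefficient on `ε_{{1,…,m}} ⊗ x_I` in `σ^k` satisfies `|I| = k` and
`{v_i : i ∈ I}` is a minimum-cardinality transversal of `H`, and every minimum
transversal arises this way. -/
theorem minimum_transversal_representation {n m : ℕ} (hm : 0 < m)
    (E : Fin m → Finset (Fin n))
    (hE : ∀ j, (E j).Nonempty) (hiso : ∀ i : Fin n, ∃ j, i ∈ E j) :
    ∃ k : ℕ, 1 ≤ k ∧
      IsLeast {k' : ℕ | ∃ I : Finset (Fin n),
        ((sigmaRep E) ^ k') (delta0 n m) ((Finset.univ : Finset (Fin m)), I) ≠ 0} k ∧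
      IsLeast {c : ℕ | ∃ I : Finset (Fin n), I.card = c ∧
        ∀ j : Fin m, ∃ i ∈ I, i ∈ E j} k ∧
      (∀ I : Finset (Fin n),
        ((sigmaRep E) ^ k) (delta0 n m) ((Finset.univ : Finset (Fin m)), I) ≠ 0 →
          I.card = k ∧ (∀ j : Fin m, ∃ i ∈ I, i ∈ E j) ∧
            ∀ I' : Finset (Fin n), (∀ j : Fin m, ∃ i ∈ I', i ∈ E j) → I.card ≤ I'.card) ∧
      (∀ I : Finset (Fin n), (∀ j : Fin m, ∃ i ∈ I, i ∈ E j) → I.card = k →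
        ((sigmaRep E) ^ k) (delta0 n m) ((Finset.univ : Finset (Fin m)), I) ≠ 0) := by
  set C : Set ℕ := {c : ℕ | ∃ I : Finset (Fin n), I.card = c ∧
    ∀ j : Fin m, ∃ i ∈ I, i ∈ E j} with hC
  have hCne : C.Nonempty := by
    refine ⟨(Finset.univ : Finset (Fin n)).card, Finset.univ, rfl, fun j => ?_⟩
    obtain ⟨i, hi⟩ := hE j
    exact ⟨i, Finset.mem_univ i, hi⟩
  set k := sInf C with hk
  have hkmem : k ∈ C := Nat.sInf_mem hCne
  obtain ⟨I0, hI0card, hI0T⟩ := hkmem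
  have hk1 : 1 ≤ k := by
    obtain ⟨i, hi, _⟩ := hI0T ⟨0, hm⟩
    rw [← hI0card]
    exact Finset.card_pos.mpr ⟨i, hi⟩
  refine ⟨k, hk1, ⟨⟨I0, ?_⟩, ?_⟩, ⟨⟨I0, hI0card, hI0T⟩, fun c hc => Nat.sInf_le hc⟩, ?_, ?_⟩
  · exact (sigma_pow_ne_zero_iff E hm k I0).mpr ⟨hI0T, le_of_eq hI0card⟩
  · rintro k' ⟨I, hI⟩
    obtain ⟨htr, hcard⟩ := (sigma_pow_ne_zero_iff E hm k' I).mp hI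
    exact le_trans (Nat.sInf_le ⟨I, rfl, htr⟩) hcard
  · intro I hI
    obtain ⟨htr, hcard⟩ := (sigma_pow_ne_zero_iff E hm k I).mp hI
    have hge : k ≤ I.card := Nat.sInf_le ⟨I, rfl, htr⟩
    exact ⟨le_antisymm hcard hge, htr,
      fun I' hI' => le_trans hcard (Nat.sInf_le ⟨I', rfl, hI'⟩)⟩
  · intro I htr hcard
    exact (sigma_pow_ne_zero_iff E hm k I).mpr ⟨htr, le_of_eq hcard⟩
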